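/- arXiv:1710.07521 — 2 statements merged into one kernel-verified Lean document; each statement's English description precedes it below -/
import Mathlib

section
/- Let B ⊆ ℝⁿ be a closed Euclidean ball, let g₁,…,g_m ∈ ℝ[X₁,…,Xₙ] be strictly quasiconcave at every point of B, and set g := (g₁,…,g_m). Then: (a) S(g) ∩ B is convex; (b) every nonzero linear form f ∈ ℝ[X₁,…,Xₙ] (nonzero homogeneous polynomial of degree 1) has at most one minimizer on S(g) ∩ B; (c) if u is a minimizer of a nonzero linear form f on S(g) ∩ B and I := {i ∈ {1,…,m} : gᵢ(u) = 0}, then u is also a minimizer of f on the set {x ∈ B : gᵢ(x) ≥ 0 for all i ∈ I}, which contains S(g) ∩ B. -/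
open MvPolynomial Finset

noncomputable section

/-- The subring of finite elements of a linearly ordered field. -/
def Ofin (R : Type) [Field R] [LinearOrder R] [IsStrictOrderedRing R] : Subring R where
  carrier := {a : R | ∃ N : ℕ, |a| ≤ (N : R)}
  zero_mem' := ⟨0, by simp⟩
  one_mem' := ⟨1, by simp⟩
  add_mem' := by
    rintro a b ⟨N, hN⟩ ⟨M, hM⟩
    exact ⟨N + M, by push_cast; exact (abs_add_le a b).trans (add_le_add hN hM)⟩
  mul_mem' := by
    rintro a b ⟨N, hN⟩ ⟨M, hM⟩
    refine ⟨N * M, ?_⟩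
    push_cast
    calc |a * b| = |a| * |b| := abs_mul a b
    _ ≤ (N : _) * (M : _) := mul_le_mul hN hM (abs_nonneg b) (Nat.cast_nonneg N)
  neg_mem' := by
    rintro a ⟨N, hN⟩
    exact ⟨N, by rwa [abs_neg]⟩

/-- A real closed extension field of `ℝ`: an order-preserving ring embedding `ι : ℝ →+* R`
such that every nonnegative element of `R` is a square and every polynomial over `R` of
odd degree has a root. -/
structure RealClosedExt (R : Type) [Field R] [LinearOrder R] [IsStrictOrderedRing R] where
  ι : ℝ →+* R
  mono : ∀ a b : ℝ, a ≤ b → ι a ≤ ι b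
  sq : ∀ a : R, 0 ≤ a → ∃ b : R, b ^ 2 = a
  oddRoot : ∀ p : Polynomial R, Odd p.natDegree → ∃ x : R, p.eval x = 0

/-- An infinitesimal element of a linearly ordered field. -/
def Infinitesimal {R : Type} [Field R] [LinearOrder R] [IsStrictOrderedRing R] (a : R) : Prop :=
  ∀ N : ℕ, 0 < N → |a| ≤ (N : R)⁻¹

/-- `st` is a standard part map if `a - ι (st a)` is infinitesimal for every finite `a`. -/
def IsStandardPart {R : Type} [Field R] [LinearOrder R] [IsStrictOrderedRing R] (e : RealClosedExt R) (st : R → ℝ) : Prop :=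
  ∀ a : R, a ∈ Ofin R → Infinitesimal (a - e.ι (st a))

/-- The embedding `ℝ →+* 𝒪_R` induced by `ι`. -/
def RealClosedExt.toOfin {R : Type} [Field R] [LinearOrder R] [IsStrictOrderedRing R] (e : RealClosedExt R) :
    ℝ →+* Ofin R where
  toFun r := ⟨e.ι r, by
    refine ⟨⌈|r|⌉₊, ?_⟩
    have h2 : |e.ι r| ≤ e.ι |r| := by
      rw [abs_le]
      constructor
      · have h := e.mono (-|r|) r (neg_abs_le r)
        rwa [map_neg] at h
      · exact e.mono r |r| (le_abs_self r)
    refine h2.trans ?_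
    have h3 := e.mono |r| (⌈|r|⌉₊ : ℝ) (Nat.le_ceil _)
    rwa [map_natCast] at h3⟩
  map_one' := Subtype.ext (map_one e.ι)
  map_mul' a b := Subtype.ext (map_mul e.ι a b)
  map_zero' := Subtype.ext (map_zero e.ι)
  map_add' a b := Subtype.ext (map_add e.ι a b)

/-- Quadratic module of a commutative ring. -/
def IsQuadraticModule {A : Type*} [CommRing A] (M : Set A) : Prop :=
  (0 : A) ∈ M ∧ (1 : A) ∈ M ∧ (∀ a ∈ M, ∀ b ∈ M, a + b ∈ M) ∧
    ∀ a : A, ∀ p ∈ M, a ^ 2 * p ∈ M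

/-- Archimedean subset of a commutative ring. -/
def IsArchimedean {A : Type*} [CommRing A] (M : Set A) : Prop :=
  ∀ a : A, ∃ N : ℕ, (N : A) + a ∈ M ∧ (N : A) - a ∈ M

/-- The ideal `I_x` generated by the `X i - x i`. -/
def idealAt {R : Type} [Field R] [LinearOrder R] [IsStrictOrderedRing R] {n : ℕ} (x : Fin n → Ofin R) :
    Ideal (MvPolynomial (Fin n) (Ofin R)) :=
  Ideal.span (Set.range fun i => X i - C (x i))

/-- The polynomial `u_x = (X₁-x₁)² + … + (Xₙ-xₙ)²` over `𝒪_R`. -/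
def uPolyO {R : Type} [Field R] [LinearOrder R] [IsStrictOrderedRing R] {n : ℕ} (x : Fin n → Ofin R) :
    MvPolynomial (Fin n) (Ofin R) :=
  ∑ i, (X i - C (x i)) ^ 2

/-- Evaluation of a polynomial with coefficients in `𝒪_R` at a point of `Rⁿ`. -/
def evalR {R : Type} [Field R] [LinearOrder R] [IsStrictOrderedRing R] {n : ℕ} (x : Fin n → R)
    (p : MvPolynomial (Fin n) (Ofin R)) : R :=
  eval₂ (Ofin R).subtype x p

/-- `vᵀ (Hess p)(x) v`, computed in `R`, for a real vector `v`. -/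
def hessQuadO {R : Type} [Field R] [LinearOrder R] [IsStrictOrderedRing R] (e : RealClosedExt R) {n : ℕ}
    (p : MvPolynomial (Fin n) (Ofin R)) (x : Fin n → Ofin R) (v : Fin n → ℝ) : R :=
  ∑ a, ∑ b, e.ι (v a) * ((eval x (pderiv a (pderiv b p)) : Ofin R) : R) * e.ι (v b)

/-- The set `S := {x ∈ ℝⁿ : st (p(x)) ≥ 0 for all p ∈ M}`. -/
def Sof {R : Type} [Field R] [LinearOrder R] [IsStrictOrderedRing R] (e : RealClosedExt R) (st : R → ℝ) {n : ℕ}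
    (M : Set (MvPolynomial (Fin n) (Ofin R))) : Set (Fin n → ℝ) :=
  {y | ∀ p ∈ M, 0 ≤ st (evalR (fun i => e.ι (y i)) p)}

/-- A state of `(I, M ∩ I, u)`: an `ℝ`-linear functional on `I`, nonnegative on `M ∩ I` and
normalized at `u` (encoded as a function on the polynomial ring whose values off `I`
are irrelevant). -/
def IsStateOn {R : Type} [Field R] [LinearOrder R] [IsStrictOrderedRing R] (e : RealClosedExt R) {n : ℕ}
    (M : Set (MvPolynomial (Fin n) (Ofin R))) (I : Ideal (MvPolynomial (Fin n) (Ofin R)))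
    (u : MvPolynomial (Fin n) (Ofin R)) (φ : MvPolynomial (Fin n) (Ofin R) → ℝ) : Prop :=
  (∀ p ∈ I, ∀ q ∈ I, φ (p + q) = φ p + φ q) ∧
  (∀ r : ℝ, ∀ p ∈ I, φ (C (e.toOfin r) * p) = r * φ p) ∧
  (∀ p ∈ I, p ∈ M → 0 ≤ φ p) ∧ φ u = 1

/-- A pure state: an extreme point of the state space (no two distinct states have it
as their midpoint). -/
def IsPureStateOn {R : Type} [Field R] [LinearOrder R] [IsStrictOrderedRing R] (e : RealClosedExt R) {n : ℕ}
    (M : Set (MvPolynomial (Fin n) (Ofin R))) (I : Ideal (MvPolynomial (Fin n) (Ofin R)))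
    (u : MvPolynomial (Fin n) (Ofin R)) (φ : MvPolynomial (Fin n) (Ofin R) → ℝ) : Prop :=
  IsStateOn e M I u φ ∧
    ∀ ψ₁ ψ₂, IsStateOn e M I u ψ₁ → IsStateOn e M I u ψ₂ →
      (∀ p ∈ I, φ p = (ψ₁ p + ψ₂ p) / 2) → ∀ p ∈ I, ψ₁ p = ψ₂ p

/-- A sum of squares in a commutative ring. -/
def IsSOS {A : Type*} [CommRing A] (p : A) : Prop :=
  ∃ (k : ℕ) (q : Fin k → A), p = ∑ i, (q i) ^ 2

/-- The basic closed semialgebraic set `S(g)`. -/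
def Sset {n m : ℕ} (g : Fin m → MvPolynomial (Fin n) ℝ) : Set (Fin n → ℝ) :=
  {x | ∀ i, 0 ≤ eval x (g i)}

/-- The quadratic module `M(g)` generated by `g` in `ℝ[X]`. -/
def QModGen {n m : ℕ} (g : Fin m → MvPolynomial (Fin n) ℝ) : Set (MvPolynomial (Fin n) ℝ) :=
  {f | ∃ (σ₀ : MvPolynomial (Fin n) ℝ) (σ : Fin m → MvPolynomial (Fin n) ℝ),
    IsSOS σ₀ ∧ (∀ i, IsSOS (σ i)) ∧ f = σ₀ + ∑ i, σ i * g i}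

/-- `g` extended by `g₀ := 1` (the index `none` corresponds to `g₀`). -/
def gext {n m : ℕ} (g : Fin m → MvPolynomial (Fin n) ℝ) :
    Option (Fin m) → MvPolynomial (Fin n) ℝ :=
  fun o => o.elim 1 g

/-- The `d`-truncated quadratic module `M_d(g)`: finite sums of terms `p² gᵢ`
(`g₀ := 1`), each of degree at most `d`. -/
def Mtrunc {n m : ℕ} (g : Fin m → MvPolynomial (Fin n) ℝ) (d : ℕ) :
    Set (MvPolynomial (Fin n) ℝ) :=
  {f | ∃ (k : ℕ) (idx : Fin k → Option (Fin m)) (p : Fin k → MvPolynomial (Fin n) ℝ),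
    (∀ j, ((p j) ^ 2 * gext g (idx j)).totalDegree ≤ d) ∧
      f = ∑ j, (p j) ^ 2 * gext g (idx j)}

/-- The polynomial `u_x = (X₁-x₁)² + … + (Xₙ-xₙ)²` over `ℝ`. -/
def uPoly {n : ℕ} (x : Fin n → ℝ) : MvPolynomial (Fin n) ℝ :=
  ∑ i, (X i - C (x i)) ^ 2

/-- The open Euclidean ball of radius `ε` around `x`. -/
def eball {n : ℕ} (x : Fin n → ℝ) (ε : ℝ) : Set (Fin n → ℝ) :=
  {y | ∑ i, (y i - x i) ^ 2 < ε ^ 2}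

/-- `vᵀ (Hess f)(x) v`, where `Hess f` is the formal Hessian matrix of `f`. -/
def hessQuad {n : ℕ} (f : MvPolynomial (Fin n) ℝ) (x : Fin n → ℝ) (v : Fin n → ℝ) : ℝ :=
  ∑ a, ∑ b, v a * eval x (pderiv a (pderiv b f)) * v b

/-- `(∇ f)(x)ᵀ v`. -/
def gradDot {n : ℕ} (f : MvPolynomial (Fin n) ℝ) (x v : Fin n → ℝ) : ℝ :=
  ∑ i, eval x (pderiv i f) * v i

/-- Strict quasiconcavity of `g` at `x`. -/
def StrictQuasiconcaveAt {n : ℕ} (g : MvPolynomial (Fin n) ℝ) (x : Fin n → ℝ) : Prop :=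
  ∀ v : Fin n → ℝ, v ≠ 0 → gradDot g x v = 0 → hessQuad g x v < 0

/-- The real zero set `Z(g)`. -/
def Zset {n : ℕ} (g : MvPolynomial (Fin n) ℝ) : Set (Fin n → ℝ) :=
  {x | eval x g = 0}

/-- The convex boundary `convbd S = S ∩ ∂(conv S)`. -/
def convbd {n : ℕ} (S : Set (Fin n → ℝ)) : Set (Fin n → ℝ) :=
  S ∩ frontier (convexHull ℝ S)

/-- The optimal value `las_d(f, g)` of the degree-`d` Lasserre relaxation. -/
def lasVal {n m : ℕ} (g : Fin m → MvPolynomial (Fin n) ℝ) (d : ℕ)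
    (f : MvPolynomial (Fin n) ℝ) : EReal :=
  ⨅ L : {L : MvPolynomial (Fin n) ℝ →ₗ[ℝ] ℝ // (∀ p ∈ Mtrunc g d, 0 ≤ L p) ∧ L 1 = 1},
    ((L.1 f : ℝ) : EReal)

/-- The degree-`d` Lasserre relaxation set `S_d(g)`. -/
def lasRelax {n m : ℕ} (g : Fin m → MvPolynomial (Fin n) ℝ) (d : ℕ) : Set (Fin n → ℝ) :=
  {y | ∃ L : MvPolynomial (Fin n) ℝ →ₗ[ℝ] ℝ,
    (∀ p ∈ Mtrunc g d, 0 ≤ L p) ∧ L 1 = 1 ∧ ∀ i, L (X i) = y i}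

end

noncomputable def lineEval {n : ℕ} (x v : Fin n → ℝ) (p : MvPolynomial (Fin n) ℝ) :
    Polynomial ℝ :=
  MvPolynomial.eval₂ Polynomial.C (fun i => Polynomial.C (x i) + Polynomial.C (v i) * Polynomial.X) p

lemma lineEval_eval {n : ℕ} (x v : Fin n → ℝ) (p : MvPolynomial (Fin n) ℝ) (t : ℝ) :
    (lineEval x v p).eval t = eval (fun i => x i + t * v i) p := by
  unfold lineEval
  rw [show (Polynomial.eval t (eval₂ Polynomial.C (fun i => Polynomial.C (x i) + Polynomial.C (v i) * Polynomial.X) p)) = (Polynomial.evalRingHom t) (eval₂ Polynomial.C (fun i => Polynomial.C (x i) + Polynomial.C (v i) * Polynomial.X) p) from rfl,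
    eval₂_comp_left]
  rw [show MvPolynomial.eval (fun i => x i + t * v i) p = eval₂ (RingHom.id ℝ) (fun i => x i + t * v i) p from rfl]
  congr 1
  · ext a; simp
  · ext i
    simp only [Function.comp, Polynomial.coe_evalRingHom, Polynomial.eval_add,
      Polynomial.eval_mul, Polynomial.eval_C, Polynomial.eval_X]
    ring

lemma lineEval_add {n : ℕ} (x v : Fin n → ℝ) (p q : MvPolynomial (Fin n) ℝ) :
    lineEval x v (p + q) = lineEval x v p + lineEval x v q := eval₂_add _ _

lemma lineEval_mul {n : ℕ} (x v : Fin n → ℝ) (p q : MvPolynomial (Fin n) ℝ) :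
    lineEval x v (p * q) = lineEval x v p * lineEval x v q := eval₂_mul _ _

lemma lineEval_derivative {n : ℕ} (x v : Fin n → ℝ) (p : MvPolynomial (Fin n) ℝ) :
    (lineEval x v p).derivative = ∑ i, lineEval x v (pderiv i p) * Polynomial.C (v i) := by
  induction p using MvPolynomial.induction_on with
  | C a => simp [lineEval]
  | add p q hp hq =>
      rw [lineEval_add, Polynomial.derivative_add, hp, hq, ← Finset.sum_add_distrib]
      exact Finset.sum_congr rfl fun i _ => by rw [map_add, lineEval_add, add_mul]
  | mul_X p i hp =>
      have hX : lineEval x v (X i) = Polynomial.C (x i) + Polynomial.C (v i) * Polynomial.X := by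
        simp [lineEval]
      have hXd : ∀ j : Fin n, lineEval x v (pderiv j (X i : MvPolynomial (Fin n) ℝ))
          = if j = i then 1 else 0 := by
        intro j
        rcases eq_or_ne j i with h | h
        · subst h; rw [pderiv_X_self, if_pos rfl]; simp [lineEval]
        · rw [pderiv_X_of_ne h.symm, if_neg h]; simp [lineEval]
      have key : ∀ j : Fin n, lineEval x v (pderiv j (p * X i)) * Polynomial.C (v j)
          = lineEval x v (pderiv j p) * Polynomial.C (v j) * (Polynomial.C (x i) + Polynomial.C (v i) * Polynomial.X)
            + (if j = i then lineEval x v p * Polynomial.C (v i) else 0) := by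
        intro j
        rw [pderiv_mul, lineEval_add, lineEval_mul, lineEval_mul, hX, hXd]
        rcases eq_or_ne j i with h | h
        · subst h; rw [if_pos rfl, if_pos rfl]; ring
        · rw [if_neg h, if_neg h]; ring
      rw [lineEval_mul, hX, Polynomial.derivative_mul, hp,
        Finset.sum_congr rfl fun j _ => key j, Finset.sum_add_distrib,
        Finset.sum_ite_eq' Finset.univ i (fun _ => lineEval x v p * Polynomial.C (v i))]
      simp only [Finset.mem_univ, if_true]
      rw [Finset.sum_mul]
      have hd : Polynomial.derivative (Polynomial.C (x i) + Polynomial.C (v i) * Polynomial.X)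
          = Polynomial.C (v i) := by simp
      rw [hd]
      try ring

lemma not_isLocalMin_of_second_deriv {q : Polynomial ℝ} {t₀ : ℝ}
    (h1 : q.derivative.eval t₀ = 0) (h2 : q.derivative.derivative.eval t₀ < 0) :
    ¬ IsLocalMin (fun t => q.eval t) t₀ := by
  intro hmin
  -- second derivative negative on a ball around t₀
  have hcont : Continuous fun t => q.derivative.derivative.eval t := q.derivative.derivative.continuous
  obtain ⟨ε, hε, hball⟩ : ∃ ε > 0, ∀ t ∈ Metric.ball t₀ ε, q.derivative.derivative.eval t < 0 := by
    have := hcont.continuousAt (x := t₀)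
    have hev : ∀ᶠ t in nhds t₀, q.derivative.derivative.eval t < 0 :=
      this.eventually_lt_const h2 |>.mono fun t ht => ht
    rcases Metric.eventually_nhds_iff_ball.mp hev with ⟨ε, hε, h⟩
    exact ⟨ε, hε, h⟩
  -- derivative strictly decreasing on the ball
  have hanti : StrictAntiOn (fun t => q.derivative.eval t) (Metric.ball t₀ ε) := by
    apply strictAntiOn_of_deriv_neg (convex_ball t₀ ε) q.derivative.continuous.continuousOn
    intro t ht
    rw [Polynomial.deriv]
    exact hball t (by rwa [interior_eq_iff_isOpen.mpr Metric.isOpen_ball] at ht)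
  -- q strictly decreasing on [t₀, t₀ + ε/2]
  have hq_anti : StrictAntiOn (fun t => q.eval t) (Set.Icc t₀ (t₀ + ε/2)) := by
    apply strictAntiOn_of_deriv_neg (convex_Icc _ _) q.continuous.continuousOn
    intro t ht
    rw [interior_Icc] at ht
    rw [Polynomial.deriv]
    have ht₀ : t₀ ∈ Metric.ball t₀ ε := Metric.mem_ball_self hε
    have htb : t ∈ Metric.ball t₀ ε := by
      rw [Metric.mem_ball, Real.dist_eq, abs_lt]
      constructor <;> [linarith [ht.1]; linarith [ht.2]]
    have := hanti ht₀ htb ht.1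
    simpa [h1] using this
  -- contradiction with local minimum
  have h3 : ∀ᶠ t in nhdsWithin t₀ (Set.Ioi t₀), q.eval t₀ ≤ q.eval t :=
    (hmin.filter_mono nhdsWithin_le_nhds)
  have h4 : Set.Ioo t₀ (t₀ + ε/2) ∈ nhdsWithin t₀ (Set.Ioi t₀) :=
    Ioo_mem_nhdsGT_of_mem ⟨le_refl _, by linarith⟩
  rcases (h3.and (Filter.eventually_of_mem h4 fun t ht => ht)).exists with ⟨t, hle, ht⟩
  have : q.eval t < q.eval t₀ :=
    hq_anti (Set.left_mem_Icc.mpr (by linarith [ht.2])) ⟨ht.1.le, ht.2.le⟩ ht.1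
  linarith




lemma noLocalMin {n : ℕ} {g : MvPolynomial (Fin n) ℝ} {x v : Fin n → ℝ} (hv : v ≠ 0)
    (hqc : StrictQuasiconcaveAt g x) :
    ¬ IsLocalMin (fun t => eval (fun i => x i + t * v i) g) 0 := by
  intro hmin
  have hfun : (fun t => eval (fun i => x i + t * v i) g) = fun t => (lineEval x v g).eval t :=
    funext fun t => by rw [lineEval_eval]
  rw [hfun] at hmin
  have hx0 : (fun i => x i + (0:ℝ) * v i) = x := funext fun i => by ring
  have hd : (lineEval x v g).derivative.eval 0 = gradDot g x v := by
    rw [lineEval_derivative, Polynomial.eval_finset_sum]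
    refine Finset.sum_congr rfl fun i _ => ?_
    rw [Polynomial.eval_mul, Polynomial.eval_C, lineEval_eval, hx0]
  have hgrad : gradDot g x v = 0 := by
    have := hmin.deriv_eq_zero
    rwa [Polynomial.deriv, hd] at this
  have hhess := hqc v hv hgrad
  have hdd : (lineEval x v g).derivative.derivative.eval 0 = hessQuad g x v := by
    rw [lineEval_derivative, map_sum, Polynomial.eval_finset_sum]
    have step : ∀ i : Fin n,
        (Polynomial.derivative (lineEval x v (pderiv i g) * Polynomial.C (v i))).eval 0
        = ∑ j, v j * eval x (pderiv j (pderiv i g)) * v i := by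
      intro i
      rw [Polynomial.derivative_mul, Polynomial.derivative_C, mul_zero, add_zero,
        lineEval_derivative, Polynomial.eval_mul, Polynomial.eval_C,
        Polynomial.eval_finset_sum, Finset.sum_mul]
      refine Finset.sum_congr rfl fun j _ => ?_
      rw [Polynomial.eval_mul, Polynomial.eval_C, lineEval_eval, hx0]
      ring
    rw [Finset.sum_congr rfl fun i _ => step i]
    unfold hessQuad
    rw [Finset.sum_comm]
  exact not_isLocalMin_of_second_deriv (by rw [hd, hgrad]) (by rw [hdd]; exact hhess) hmin

lemma no_interior_min {n : ℕ} {B : Set (Fin n → ℝ)} (hBconv : Convex ℝ B)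
    {g : MvPolynomial (Fin n) ℝ} (hqc : ∀ y ∈ B, StrictQuasiconcaveAt g y)
    {x y : Fin n → ℝ} (hx : x ∈ B) (hy : y ∈ B) (hxy : x ≠ y)
    {t₀ : ℝ} (ht₀ : t₀ ∈ Set.Ioo (0:ℝ) 1)
    (hlm : IsLocalMin (fun t => eval (fun i => x i + t * (y i - x i)) g) t₀) : False := by
  set v : Fin n → ℝ := fun i => y i - x i with hvdef
  have hv : v ≠ 0 := by
    intro h0
    apply hxy
    funext i
    have := congrFun h0 i
    simp only [hvdef, Pi.zero_apply] at this
    linarith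
  have hzB : (fun i => x i + t₀ * v i) ∈ B := by
    have hmem := hBconv hx hy (by linarith [ht₀.2] : (0:ℝ) ≤ 1 - t₀)
      (le_of_lt ht₀.1) (by ring)
    have : (1 - t₀) • x + t₀ • y = fun i => x i + t₀ * v i := by
      funext i
      simp only [Pi.add_apply, Pi.smul_apply, smul_eq_mul, hvdef]
      ring
    rwa [this] at hmem
  have heq : ∀ s : ℝ, eval (fun i => (x i + t₀ * v i) + s * v i) g
      = eval (fun i => x i + (t₀ + s) * v i) g := by
    intro s
    exact congrArg (fun w => eval w g) (funext fun i => by ring)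
  have ht : Filter.Tendsto (fun s : ℝ => t₀ + s) (nhds 0) (nhds t₀) := by
    have hc : Continuous (fun s : ℝ => t₀ + s) := continuous_const.add continuous_id
    have := hc.tendsto (0 : ℝ)
    simpa using this
  have hshift : IsLocalMin (fun s => eval (fun i => (x i + t₀ * v i) + s * v i) g) 0 := by
    have hev := ht.eventually hlm
    refine hev.mono fun s hs => ?_
    simp only [heq s, heq 0, add_zero]
    simpa using hs
  exact noLocalMin hv (hqc _ hzB) hshift

lemma segment_nonneg {n : ℕ} {B : Set (Fin n → ℝ)} (hBconv : Convex ℝ B)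
    {g : MvPolynomial (Fin n) ℝ} (hqc : ∀ y ∈ B, StrictQuasiconcaveAt g y)
    {x y : Fin n → ℝ} (hx : x ∈ B) (hy : y ∈ B)
    (hgx : 0 ≤ eval x g) (hgy : 0 ≤ eval y g) :
    ∀ t ∈ Set.Icc (0:ℝ) 1, 0 ≤ eval (fun i => x i + t * (y i - x i)) g := by
  by_contra hcon
  push_neg at hcon
  obtain ⟨t₁, ht₁, hneg⟩ := hcon
  rcases eq_or_ne x y with rfl | hxy
  · have : (fun i => x i + t₁ * (x i - x i)) = x := funext fun i => by ring
    rw [this] at hneg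
    linarith
  set h : ℝ → ℝ := fun t => eval (fun i => x i + t * (y i - x i)) g with hdef
  have hfun : h = fun t => (lineEval x (fun i => y i - x i) g).eval t :=
    funext fun t => by rw [lineEval_eval]
  have hcont : Continuous h := by rw [hfun]; exact (lineEval x _ g).continuous
  obtain ⟨t₀, ht₀mem, ht₀min⟩ := isCompact_Icc.exists_isMinOn
    (Set.nonempty_Icc.mpr zero_le_one) hcont.continuousOn
  have hmin_neg : h t₀ < 0 := lt_of_le_of_lt (ht₀min ht₁) hneg
  have h0 : h 0 = eval x g :=
    congrArg (fun w => eval w g) (funext fun i => by ring)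
  have h1 : h 1 = eval y g :=
    congrArg (fun w => eval w g) (funext fun i => by ring)
  have ht₀0 : t₀ ≠ 0 := fun hh => by rw [hh, h0] at hmin_neg; linarith
  have ht₀1 : t₀ ≠ 1 := fun hh => by rw [hh, h1] at hmin_neg; linarith
  have ht₀Ioo : t₀ ∈ Set.Ioo (0:ℝ) 1 :=
    ⟨lt_of_le_of_ne ht₀mem.1 (Ne.symm ht₀0), lt_of_le_of_ne ht₀mem.2 ht₀1⟩
  exact no_interior_min hBconv hqc hx hy hxy ht₀Ioo
    (ht₀min.isLocalMin (Icc_mem_nhds ht₀Ioo.1 ht₀Ioo.2))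

lemma segment_pos {n : ℕ} {B : Set (Fin n → ℝ)} (hBconv : Convex ℝ B)
    {g : MvPolynomial (Fin n) ℝ} (hqc : ∀ y ∈ B, StrictQuasiconcaveAt g y)
    {x y : Fin n → ℝ} (hx : x ∈ B) (hy : y ∈ B) (hxy : x ≠ y)
    (hgx : 0 ≤ eval x g) (hgy : 0 ≤ eval y g) :
    ∀ t ∈ Set.Ioo (0:ℝ) 1, 0 < eval (fun i => x i + t * (y i - x i)) g := by
  intro t ht
  have hnn := segment_nonneg hBconv hqc hx hy hgx hgy
  rcases lt_or_eq_of_le (hnn t ⟨ht.1.le, ht.2.le⟩) with hlt | heq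
  · exact hlt
  exfalso
  have hminon : IsMinOn (fun t => eval (fun i => x i + t * (y i - x i)) g) (Set.Icc 0 1) t := by
    intro s hs
    simp only [Set.mem_setOf_eq]
    rw [← heq]
    exact hnn s hs
  exact no_interior_min hBconv hqc hx hy hxy ht
    (hminon.isLocalMin (Icc_mem_nhds ht.1 ht.2))

lemma eval_pos_eventually {n : ℕ} {g : MvPolynomial (Fin n) ℝ} {x : Fin n → ℝ} (v : Fin n → ℝ)
    (hpos : 0 < eval x g) :
    ∀ᶠ t in nhds (0:ℝ), 0 < eval (fun j => x j + t * v j) g := by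
  have hfun : (fun t : ℝ => eval (fun j => x j + t * v j) g)
      = fun t => (lineEval x v g).eval t :=
    funext fun t => by rw [lineEval_eval]
  have h0 : (lineEval x v g).eval 0 = eval x g := by
    rw [lineEval_eval]
    exact congrArg (fun w => eval w g) (funext fun i => by ring)
  have hc := (lineEval x v g).continuous.tendsto 0
  rw [h0] at hc
  have hev := hc.eventually_const_lt hpos
  exact hev.mono fun t ht => lineEval_eval x v g t ▸ ht

lemma ball_convex {n : ℕ} (c : Fin n → ℝ) (r : ℝ) :
    Convex ℝ {y : Fin n → ℝ | ∑ i, (y i - c i) ^ 2 ≤ r ^ 2} := by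
  intro x hx y hy a b ha hb hab
  simp only [Set.mem_setOf_eq] at *
  have key : ∀ i, ((a • x + b • y) i - c i)^2 ≤ a * (x i - c i)^2 + b * (y i - c i)^2 := by
    intro i
    simp only [Pi.add_apply, Pi.smul_apply, smul_eq_mul]
    have hab' : a = 1 - b := by linarith
    subst hab'
    nlinarith [mul_nonneg (mul_nonneg hb (by linarith : (0:ℝ) ≤ 1 - b))
      (sq_nonneg ((x i - c i) - (y i - c i)))]
  calc ∑ i, ((a • x + b • y) i - c i)^2
      ≤ ∑ i, (a * (x i - c i)^2 + b * (y i - c i)^2) := Finset.sum_le_sum fun i _ => key i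
    _ = a * ∑ i, (x i - c i)^2 + b * ∑ i, (y i - c i)^2 := by
        rw [Finset.sum_add_distrib, Finset.mul_sum, Finset.mul_sum]
    _ ≤ a * r^2 + b * r^2 := add_le_add (mul_le_mul_of_nonneg_left hx ha)
        (mul_le_mul_of_nonneg_left hy hb)
    _ = r^2 := by rw [← add_mul, hab, one_mul]


theorem statement_15 {n m : ℕ} (c : Fin n → ℝ) (r : ℝ) (hr : 0 ≤ r)
    (B : Set (Fin n → ℝ)) (hB : B = {y | ∑ i, (y i - c i) ^ 2 ≤ r ^ 2})
    (g : Fin m → MvPolynomial (Fin n) ℝ)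
    (hqc : ∀ i, ∀ y ∈ B, StrictQuasiconcaveAt (g i) y) :
    Convex ℝ (Sset g ∩ B) ∧
    (∀ w : Fin n → ℝ, w ≠ 0 → ∀ u v : Fin n → ℝ,
      u ∈ Sset g ∩ B → v ∈ Sset g ∩ B →
      (∀ y ∈ Sset g ∩ B, ∑ i, w i * u i ≤ ∑ i, w i * y i) →
      (∀ y ∈ Sset g ∩ B, ∑ i, w i * v i ≤ ∑ i, w i * y i) → u = v) ∧
    (∀ w : Fin n → ℝ, w ≠ 0 → ∀ u : Fin n → ℝ, u ∈ Sset g ∩ B →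
      (∀ y ∈ Sset g ∩ B, ∑ i, w i * u i ≤ ∑ i, w i * y i) →
      (Sset g ∩ B ⊆ {y | y ∈ B ∧ ∀ i, eval u (g i) = 0 → 0 ≤ eval y (g i)} ∧
        ∀ y ∈ {y | y ∈ B ∧ ∀ i, eval u (g i) = 0 → 0 ≤ eval y (g i)},
          ∑ i, w i * u i ≤ ∑ i, w i * y i)) := by
  have hBconv : Convex ℝ B := hB ▸ ball_convex c r
  -- Part (a): convexity
  have hconv : Convex ℝ (Sset g ∩ B) := by
    intro x hx y hy a b ha hb hab
    refine ⟨?_, hBconv hx.2 hy.2 ha hb hab⟩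
    intro i
    have hpt : (a • x + b • y) = fun j => x j + b * (y j - x j) := by
      funext j
      have ha' : a = 1 - b := by linarith
      simp only [Pi.add_apply, Pi.smul_apply, smul_eq_mul, ha']
      ring
    rw [hpt]
    exact segment_nonneg hBconv (hqc i) hx.2 hy.2 (hx.1 i) (hy.1 i) b ⟨hb, by linarith⟩
  refine ⟨hconv, ?_, ?_⟩
  -- Part (b): uniqueness of minimizer
  · intro w hw u v hu hv hmu hmv
    by_contra huv
    set M : Fin n → ℝ := fun i => (u i + v i) / 2 with hm
    -- M is strictly inside the ball
    have hdiff_pos : 0 < ∑ i, (u i - v i) ^ 2 := by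
      obtain ⟨i, hi⟩ := Function.ne_iff.mp huv
      refine Finset.sum_pos' (fun j _ => sq_nonneg _) ⟨i, Finset.mem_univ i, ?_⟩
      exact lt_of_le_of_ne (sq_nonneg _) (Ne.symm (pow_ne_zero 2 (sub_ne_zero.mpr hi)))
    have huB : ∑ i, (u i - c i) ^ 2 ≤ r ^ 2 := by
      have := hu.2; rw [hB] at this; exact this
    have hvB : ∑ i, (v i - c i) ^ 2 ≤ r ^ 2 := by
      have := hv.2; rw [hB] at this; exact this
    have hmball : ∑ i, (M i - c i) ^ 2 < r ^ 2 := by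
      have e : ∀ i : Fin n, (M i - c i) ^ 2
          = ((u i - c i) ^ 2 + (v i - c i) ^ 2) / 2 - (u i - v i) ^ 2 / 4 := by
        intro i; simp only [hm]; ring
      rw [Finset.sum_congr rfl fun i _ => e i, Finset.sum_sub_distrib, ← Finset.sum_div,
        ← Finset.sum_div, Finset.sum_add_distrib]
      linarith
    have hmB : M ∈ B := by rw [hB]; exact le_of_lt hmball
    -- g i is strictly positive at M
    have hmrep : M = fun j => u j + (1 / 2 : ℝ) * (v j - u j) := by
      funext j; simp only [hm]; ring
    have hgpos : ∀ i, 0 < eval M (g i) := by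
      intro i
      rw [hmrep]
      exact segment_pos hBconv (hqc i) hu.2 hv.2 huv (hu.1 i) (hv.1 i) (1/2)
        ⟨by norm_num, by norm_num⟩
    -- the value of w at M equals the minimum
    have hwv : ∑ i, w i * v i = ∑ i, w i * u i :=
      le_antisymm (hmv u hu) (hmu v hv)
    have hwm : ∑ i, w i * M i = ∑ i, w i * u i := by
      rw [Finset.sum_congr rfl fun i (_ : i ∈ Finset.univ) =>
        show w i * M i = (w i * u i + w i * v i) / 2 from by simp only [hm]; ring,
        ← Finset.sum_div, Finset.sum_add_distrib, hwv]
      ring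
    -- perturb M in direction -w
    have hev : ∀ᶠ t in nhdsWithin (0:ℝ) (Set.Ioi 0),
        (∀ i, 0 < eval (fun j => M j + t * (-(w j))) (g i)) ∧
          (∑ j, (M j + t * (-(w j)) - c j) ^ 2 < r ^ 2) ∧ 0 < t := by
      refine Filter.Eventually.and ?_ (Filter.Eventually.and ?_ ?_)
      · refine Filter.Eventually.filter_mono nhdsWithin_le_nhds ?_
        rw [Filter.eventually_all]
        exact fun i => eval_pos_eventually _ (hgpos i)
      · refine Filter.Eventually.filter_mono nhdsWithin_le_nhds ?_
        have hc : Continuous fun t : ℝ => ∑ j, (M j + t * (-(w j)) - c j) ^ 2 := by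
          apply continuous_finset_sum
          intro j _
          exact ((continuous_const.add ((continuous_id.mul continuous_const))).sub
            continuous_const).pow 2
        refine (hc.tendsto 0).eventually_lt_const ?_
        simpa using hmball
      · exact Filter.eventually_of_mem self_mem_nhdsWithin fun t ht => ht
    obtain ⟨t, hts, htb, htpos⟩ := hev.exists
    set z : Fin n → ℝ := fun j => M j + t * (-(w j)) with hz
    have hzmem : z ∈ Sset g ∩ B := by
      refine ⟨fun i => (hts i).le, ?_⟩
      rw [hB]
      exact le_of_lt htb
    have hle := hmu z hzmem
    have hwz : ∑ i, w i * z i = ∑ i, w i * u i - t * ∑ i, (w i) ^ 2 := by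
      rw [← hwm, Finset.mul_sum, ← Finset.sum_sub_distrib]
      exact Finset.sum_congr rfl fun i _ => by simp only [hz]; ring
    have hwpos : 0 < ∑ i, (w i) ^ 2 := by
      obtain ⟨i, hi⟩ := Function.ne_iff.mp hw
      refine Finset.sum_pos' (fun j _ => sq_nonneg _) ⟨i, Finset.mem_univ i, ?_⟩
      exact lt_of_le_of_ne (sq_nonneg _) (Ne.symm (pow_ne_zero 2 hi))
    rw [hwz] at hle
    nlinarith
  -- Part (c)
  · intro w hw u hu hmu
    constructor
    · intro y hy
      exact ⟨hy.2, fun i _ => hy.1 i⟩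
    · intro y hy
      by_contra hlt
      push_neg at hlt
      have hyu : u ≠ y := by
        intro h
        rw [← h] at hlt
        exact lt_irrefl _ hlt
      have hev : ∀ᶠ t in nhdsWithin (0:ℝ) (Set.Ioi 0),
          (∀ i, 0 ≤ eval (fun j => u j + t * (y j - u j)) (g i)) ∧ t ∈ Set.Ioo (0:ℝ) 1 := by
        refine Filter.Eventually.and ?_
          (Filter.eventually_of_mem (Ioo_mem_nhdsGT_of_mem ⟨le_refl _, one_pos⟩) fun t ht => ht)
        rw [Filter.eventually_all]
        intro i
        by_cases hgi : eval u (g i) = 0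
        · refine Filter.eventually_of_mem (Ioo_mem_nhdsGT_of_mem ⟨le_refl _, one_pos⟩) ?_
          intro t ht
          exact segment_nonneg hBconv (hqc i) hu.2 hy.1 (le_of_eq hgi.symm) (hy.2 i hgi) t
            ⟨ht.1.le, ht.2.le⟩
        · have hgi' : 0 < eval u (g i) := lt_of_le_of_ne (hu.1 i) (Ne.symm hgi)
          exact Filter.Eventually.filter_mono nhdsWithin_le_nhds
            ((eval_pos_eventually _ hgi').mono fun t ht => ht.le)
      obtain ⟨t, htS, htI⟩ := hev.exists
      set z : Fin n → ℝ := fun j => u j + t * (y j - u j) with hz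
      have hzB : z ∈ B := by
        have hmem := hBconv hu.2 hy.1 (by linarith [htI.2] : (0:ℝ) ≤ 1 - t) htI.1.le (by ring)
        have : (1 - t) • u + t • y = z := by
          funext j
          simp only [Pi.add_apply, Pi.smul_apply, smul_eq_mul, hz]
          ring
        rwa [this] at hmem
      have hle := hmu z ⟨htS, hzB⟩
      have hwz : ∑ i, w i * z i
          = ∑ i, w i * u i + t * (∑ i, w i * y i - ∑ i, w i * u i) := by
        rw [← Finset.sum_sub_distrib, Finset.mul_sum, ← Finset.sum_add_distrib]
        exact Finset.sum_congr rfl fun i _ => by simp only [hz]; ring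
      rw [hwz] at hle
      nlinarith [htI.1]
end

section
/- Let g = (g₁,…,g_m) ∈ ℝ[X₁,…,Xₙ]^m and x ∈ S(g), and suppose there exists y ∈ S(g)∖{x} such that the segment conv{x, y} is contained in S(g). Set I := {i ∈ {1,…,m} : gᵢ(x) = 0} and suppose gᵢ is strictly quasiconcave at x for all i ∈ I. Let I_x := the ideal of ℝ[X₁,…,Xₙ] generated by X₁ − x₁, …, Xₙ − xₙ, and I_x² its second ideal power. Fix v ∈ ℝⁿ and define φ : ℝ[X₁,…,Xₙ] → ℝ by φ(p) := vᵀ(Hess p)(x)v. Then φ(q) ≥ 0 for every q ∈ M(g) ∩ I_x². -/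
open MvPolynomial Finset

noncomputable section

section AuxLemmas

variable {n : ℕ}

private lemma gradDot_add (p q : MvPolynomial (Fin n) ℝ) (x w : Fin n → ℝ) :
    gradDot (p + q) x w = gradDot p x w + gradDot q x w := by
  simp [gradDot, add_mul, Finset.sum_add_distrib]

private lemma gradDot_sum {ι : Type*} (s : Finset ι) (f : ι → MvPolynomial (Fin n) ℝ)
    (x w : Fin n → ℝ) :
    gradDot (∑ i ∈ s, f i) x w = ∑ i ∈ s, gradDot (f i) x w := by
  classical
  induction s using Finset.induction_on with
  | empty => simp [gradDot]
  | insert _ _ h ih => rw [Finset.sum_insert h, Finset.sum_insert h, gradDot_add, ih]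

private lemma gradDot_mul (p q : MvPolynomial (Fin n) ℝ) (x w : Fin n → ℝ) :
    gradDot (p * q) x w = eval x p * gradDot q x w + eval x q * gradDot p x w := by
  unfold gradDot
  rw [Finset.mul_sum, Finset.mul_sum, ← Finset.sum_add_distrib]
  refine Finset.sum_congr rfl fun i _ => ?_
  rw [pderiv_mul, map_add, map_mul, map_mul]
  ring

private lemma hessQuad_add (p q : MvPolynomial (Fin n) ℝ) (x v : Fin n → ℝ) :
    hessQuad (p + q) x v = hessQuad p x v + hessQuad q x v := by
  simp [hessQuad, mul_add, add_mul, Finset.sum_add_distrib]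

private lemma hessQuad_sum {ι : Type*} (s : Finset ι) (f : ι → MvPolynomial (Fin n) ℝ)
    (x v : Fin n → ℝ) :
    hessQuad (∑ i ∈ s, f i) x v = ∑ i ∈ s, hessQuad (f i) x v := by
  classical
  induction s using Finset.induction_on with
  | empty => simp [hessQuad]
  | insert _ _ h ih => rw [Finset.sum_insert h, Finset.sum_insert h, hessQuad_add, ih]

private lemma hessQuad_mul_left (σp gp : MvPolynomial (Fin n) ℝ) (x v : Fin n → ℝ)
    (h0 : eval x σp = 0) (h1 : ∀ i, eval x (pderiv i σp) = 0) :
    hessQuad (σp * gp) x v = eval x gp * hessQuad σp x v := by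
  unfold hessQuad
  rw [Finset.mul_sum]
  refine Finset.sum_congr rfl fun a _ => ?_
  rw [Finset.mul_sum]
  refine Finset.sum_congr rfl fun b _ => ?_
  simp only [pderiv_mul, map_add, map_mul, h0, h1]
  ring

private lemma hessQuad_sq (p : MvPolynomial (Fin n) ℝ) (x v : Fin n → ℝ)
    (h : eval x p = 0) :
    hessQuad (p ^ 2) x v = 2 * (∑ a, v a * eval x (pderiv a p)) ^ 2 := by
  have key : ∀ a b : Fin n, eval x (pderiv a (pderiv b (p ^ 2)))
      = 2 * (eval x (pderiv a p) * eval x (pderiv b p)) := by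
    intro a b
    rw [pow_two]
    simp only [pderiv_mul, map_add, map_mul, h]
    ring
  unfold hessQuad
  rw [sq (∑ a, v a * eval x (pderiv a p)), Finset.sum_mul_sum, Finset.mul_sum]
  refine Finset.sum_congr rfl fun a _ => ?_
  rw [Finset.mul_sum]
  refine Finset.sum_congr rfl fun b _ => ?_
  rw [key a b]
  ring

private lemma isSOS_eval_nonneg {p : MvPolynomial (Fin n) ℝ} (hp : IsSOS p) (x : Fin n → ℝ) :
    0 ≤ eval x p := by
  obtain ⟨k, q, rfl⟩ := hp
  rw [map_sum]
  exact Finset.sum_nonneg fun j _ => by rw [map_pow]; positivity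

private lemma isSOS_flat {p : MvPolynomial (Fin n) ℝ} (hp : IsSOS p) (x : Fin n → ℝ)
    (h : eval x p = 0) :
    (∀ i, eval x (pderiv i p) = 0) ∧ ∀ v, 0 ≤ hessQuad p x v := by
  obtain ⟨k, q, rfl⟩ := hp
  have hz : ∀ j, eval x (q j) = 0 := by
    have h' : ∑ j, (eval x (q j)) ^ 2 = 0 := by
      simpa [map_sum, map_pow] using h
    intro j
    have := (Finset.sum_eq_zero_iff_of_nonneg
      (fun j _ => sq_nonneg (eval x (q j)))).mp h' j (Finset.mem_univ j)
    exact pow_eq_zero_iff (two_ne_zero) |>.mp this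
  constructor
  · intro i
    rw [map_sum, map_sum]
    refine Finset.sum_eq_zero fun j _ => ?_
    rw [pow_two, pderiv_mul, map_add, map_mul, map_mul, hz j]
    ring
  · intro v
    rw [hessQuad_sum]
    refine Finset.sum_nonneg fun j _ => ?_
    rw [hessQuad_sq _ x v (hz j)]
    positivity

private def flatIdeal (x : Fin n → ℝ) : Ideal (MvPolynomial (Fin n) ℝ) where
  carrier := {q | eval x q = 0 ∧ ∀ i, eval x (pderiv i q) = 0}
  zero_mem' := by simp
  add_mem' := by
    rintro a b ⟨ha0, ha1⟩ ⟨hb0, hb1⟩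
    exact ⟨by simp [ha0, hb0], fun i => by simp [ha1 i, hb1 i]⟩
  smul_mem' := by
    rintro c q ⟨h0, h1⟩
    refine ⟨by simp [smul_eq_mul, h0], fun i => ?_⟩
    simp [smul_eq_mul, pderiv_mul, h0, h1 i]

private lemma mem_flat {x : Fin n → ℝ} {q : MvPolynomial (Fin n) ℝ}
    (hq : q ∈ (Ideal.span (Set.range fun i => X i - C (x i)) :
      Ideal (MvPolynomial (Fin n) ℝ)) ^ 2) :
    eval x q = 0 ∧ ∀ i, eval x (pderiv i q) = 0 := by
  set I := (Ideal.span (Set.range fun i => X i - C (x i)) :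
    Ideal (MvPolynomial (Fin n) ℝ)) with hI
  have hIe : ∀ p ∈ I, eval x p = 0 := by
    intro p hp
    have hle : I ≤ RingHom.ker (eval x) := by
      rw [hI, Ideal.span_le]
      rintro _ ⟨i, rfl⟩
      simp [RingHom.mem_ker]
    exact hle hp
  have hle2 : I ^ 2 ≤ flatIdeal x := by
    rw [pow_two, Ideal.mul_le]
    intro r hr s hs
    refine ⟨?_, fun i => ?_⟩
    · rw [map_mul, hIe r hr, zero_mul]
    · rw [pderiv_mul, map_add, map_mul, map_mul, hIe r hr, hIe s hs]
      ring
  exact hle2 hq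

private lemma eval_zero_nonneg (Q : Polynomial ℝ)
    (h : ∀ t ∈ Set.Ioc (0 : ℝ) 1, 0 ≤ Q.eval t) : 0 ≤ Q.eval 0 := by
  have hc : Filter.Tendsto (fun t => Q.eval t) (nhdsWithin 0 (Set.Ioi (0 : ℝ)))
      (nhds (Q.eval 0)) := ((Q.continuous).tendsto 0).mono_left nhdsWithin_le_nhds
  have hev : ∀ᶠ t in nhdsWithin (0 : ℝ) (Set.Ioi 0), 0 ≤ Q.eval t := by
    have h1 : ∀ᶠ t in nhdsWithin (0 : ℝ) (Set.Ioi 0), t ∈ Set.Ioi (0 : ℝ) :=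
      eventually_mem_nhdsWithin
    have h2 : ∀ᶠ t in nhdsWithin (0 : ℝ) (Set.Ioi 0), t < 1 :=
      Filter.eventually_of_mem (nhdsWithin_le_nhds (Iio_mem_nhds one_pos)) fun t ht => ht
    filter_upwards [h1, h2] with t ht1 ht2
    exact h t ⟨ht1, le_of_lt ht2⟩
  exact ge_of_tendsto hc hev

private lemma coeff_nonneg_of_nonneg (P : Polynomial ℝ)
    (h : ∀ t ∈ Set.Icc (0 : ℝ) 1, 0 ≤ P.eval t) (h0 : P.eval 0 = 0) :
    0 ≤ P.coeff 1 ∧ (P.coeff 1 = 0 → 0 ≤ P.coeff 2) := by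
  have hc0 : P.coeff 0 = 0 := by rw [Polynomial.coeff_zero_eq_eval_zero, h0]
  have hP : P = Polynomial.X * P.divX := by
    conv_lhs => rw [← Polynomial.X_mul_divX_add P]
    rw [hc0]
    simp
  have h1 : ∀ t ∈ Set.Ioc (0 : ℝ) 1, 0 ≤ (P.divX).eval t := by
    intro t ht
    have h' := h t ⟨le_of_lt ht.1, ht.2⟩
    rw [hP] at h'
    simp only [Polynomial.eval_mul, Polynomial.eval_X] at h'
    by_contra hlt
    push_neg at hlt
    nlinarith [ht.1]
  have hA : 0 ≤ P.coeff 1 := by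
    have := eval_zero_nonneg P.divX h1
    rwa [← Polynomial.coeff_zero_eq_eval_zero, Polynomial.coeff_divX] at this
  refine ⟨hA, fun hA0 => ?_⟩
  have hc0' : P.divX.coeff 0 = 0 := by rw [Polynomial.coeff_divX]; exact hA0
  have hP2 : P.divX = Polynomial.X * P.divX.divX := by
    conv_lhs => rw [← Polynomial.X_mul_divX_add P.divX]
    rw [hc0']
    simp
  have h2 : ∀ t ∈ Set.Ioc (0 : ℝ) 1, 0 ≤ (P.divX.divX).eval t := by
    intro t ht
    have h' := h1 t ht
    rw [hP2] at h'
    simp only [Polynomial.eval_mul, Polynomial.eval_X] at h'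
    by_contra hlt
    push_neg at hlt
    nlinarith [ht.1]
  have := eval_zero_nonneg P.divX.divX h2
  rwa [← Polynomial.coeff_zero_eq_eval_zero, Polynomial.coeff_divX, Polynomial.coeff_divX] at this

private def lcmap (x w : Fin n → ℝ) : MvPolynomial (Fin n) ℝ →ₐ[ℝ] Polynomial ℝ :=
  aeval (fun i => Polynomial.C (x i) + Polynomial.C (w i) * Polynomial.X)

private lemma lcmap_X (x w : Fin n → ℝ) (i : Fin n) :
    lcmap x w (X i) = Polynomial.C (x i) + Polynomial.C (w i) * Polynomial.X :=
  aeval_X _ i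

private lemma lcmap_eval (x w : Fin n → ℝ) (p : MvPolynomial (Fin n) ℝ) (t : ℝ) :
    (lcmap x w p).eval t = eval (fun i => x i + w i * t) p := by
  induction p using MvPolynomial.induction_on with
  | C a => simp [lcmap, Polynomial.algebraMap_eq]
  | add p q hp hq => simp only [map_add, Polynomial.eval_add, hp, hq]
  | mul_X p i hp =>
    rw [map_mul, Polynomial.eval_mul, hp, lcmap_X, map_mul]
    simp

private lemma lcmap_eval_zero (x w : Fin n → ℝ) (p : MvPolynomial (Fin n) ℝ) :
    (lcmap x w p).eval 0 = eval x p := by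
  rw [lcmap_eval]
  have hx0 : (fun i => x i + w i * 0) = x := by funext i; simp
  rw [hx0]

private lemma lcmap_derivative (x w : Fin n → ℝ) (p : MvPolynomial (Fin n) ℝ) :
    Polynomial.derivative (lcmap x w p)
      = ∑ i, Polynomial.C (w i) * lcmap x w (pderiv i p) := by
  classical
  induction p using MvPolynomial.induction_on with
  | C a => simp [lcmap, Polynomial.algebraMap_eq]
  | add p q hp hq => simp only [map_add, hp, hq, mul_add, Finset.sum_add_distrib]
  | mul_X p j hp =>
    rw [map_mul, Polynomial.derivative_mul, hp, lcmap_X]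
    have hder : Polynomial.derivative
        (Polynomial.C (x j) + Polynomial.C (w j) * Polynomial.X) = Polynomial.C (w j) := by
      simp
    rw [hder]
    have step : ∀ i : Fin n, Polynomial.C (w i) * lcmap x w (pderiv i (p * X j))
        = Polynomial.C (w i) * lcmap x w (pderiv i p) * lcmap x w (X j)
          + Polynomial.C (w i) * lcmap x w (pderiv i (X j)) * lcmap x w p := by
      intro i
      rw [pderiv_mul, map_add, map_mul, map_mul]
      ring
    rw [Finset.sum_congr rfl fun i _ => step i, Finset.sum_add_distrib]
    congr 1
    · rw [Finset.sum_mul, lcmap_X]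
    · have hstep : ∀ i : Fin n, Polynomial.C (w i) * lcmap x w (pderiv i (X j)) * lcmap x w p
          = if i = j then Polynomial.C (w j) * lcmap x w p else 0 := by
        intro i
        by_cases hij : i = j
        · subst hij
          rw [pderiv_X_self, map_one, mul_one, if_pos rfl]
        · rw [pderiv_X_of_ne (Ne.symm hij), map_zero, mul_zero, zero_mul, if_neg hij]
      rw [Finset.sum_congr rfl fun i _ => hstep i, Finset.sum_ite_eq' Finset.univ j
        (fun _ => Polynomial.C (w j) * lcmap x w p), if_pos (Finset.mem_univ j)]
      exact mul_comm _ _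

private lemma lcmap_coeff_one (x w : Fin n → ℝ) (p : MvPolynomial (Fin n) ℝ) :
    (lcmap x w p).coeff 1 = gradDot p x w := by
  have h1 : (lcmap x w p).coeff 1 = (Polynomial.derivative (lcmap x w p)).eval 0 := by
    rw [← Polynomial.coeff_zero_eq_eval_zero, Polynomial.coeff_derivative]
    push_cast
    ring
  rw [h1, lcmap_derivative, Polynomial.eval_finset_sum]
  unfold gradDot
  refine Finset.sum_congr rfl fun i _ => ?_
  rw [Polynomial.eval_mul, Polynomial.eval_C, lcmap_eval_zero]
  ring

private lemma lcmap_coeff_two (x w : Fin n → ℝ) (p : MvPolynomial (Fin n) ℝ) :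
    2 * (lcmap x w p).coeff 2 = hessQuad p x w := by
  have h2 : 2 * (lcmap x w p).coeff 2
      = (Polynomial.derivative (Polynomial.derivative (lcmap x w p))).eval 0 := by
    rw [← Polynomial.coeff_zero_eq_eval_zero, Polynomial.coeff_derivative,
      Polynomial.coeff_derivative]
    push_cast
    ring
  have key : (Polynomial.derivative (Polynomial.derivative (lcmap x w p))).eval 0
      = ∑ a, ∑ b, w a * eval x (pderiv b (pderiv a p)) * w b := by
    rw [lcmap_derivative, map_sum, Polynomial.eval_finset_sum]
    refine Finset.sum_congr rfl fun a _ => ?_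
    rw [Polynomial.derivative_C_mul, lcmap_derivative, Finset.mul_sum,
      Polynomial.eval_finset_sum]
    refine Finset.sum_congr rfl fun b _ => ?_
    rw [Polynomial.eval_mul, Polynomial.eval_mul, Polynomial.eval_C, Polynomial.eval_C,
      lcmap_eval_zero]
    ring
  rw [h2, key, Finset.sum_comm]
  unfold hessQuad
  refine Finset.sum_congr rfl fun a _ => Finset.sum_congr rfl fun b _ => ?_
  ring

end AuxLemmas

end
theorem statement_19 {n m : ℕ} (g : Fin m → MvPolynomial (Fin n) ℝ)
    (x : Fin n → ℝ) (hx : x ∈ Sset g) (y : Fin n → ℝ) (hy : y ∈ Sset g) (hxy : y ≠ x)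
    (hseg : segment ℝ x y ⊆ Sset g)
    (hqc : ∀ i, eval x (g i) = 0 → StrictQuasiconcaveAt (g i) x)
    (v : Fin n → ℝ) :
    ∀ q ∈ QModGen g,
      q ∈ (Ideal.span (Set.range fun i => X i - C (x i)) :
        Ideal (MvPolynomial (Fin n) ℝ)) ^ 2 →
      0 ≤ hessQuad q x v := by
  intro q hq hq2
  obtain ⟨σ0, σ, hσ0, hσ, hqeq⟩ := hq
  subst hqeq
  obtain ⟨hq0, hq1⟩ := mem_flat hq2
  set w : Fin n → ℝ := fun i => y i - x i with hw
  have hwne : w ≠ 0 := by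
    intro hcon
    apply hxy
    funext i
    have := congrFun hcon i
    simp only [hw, Pi.zero_apply] at this
    linarith
  have hseg' : ∀ t ∈ Set.Icc (0 : ℝ) 1, (fun i => x i + w i * t) ∈ Sset g := by
    intro t ht
    apply hseg
    rw [segment_eq_image']
    refine ⟨t, ht, ?_⟩
    funext i
    simp only [hw, Pi.add_apply, Pi.smul_apply, Pi.sub_apply, smul_eq_mul]
    ring
  -- active constraints have positive directional derivative along w
  have hactive : ∀ i, eval x (g i) = 0 → 0 < gradDot (g i) x w := by
    intro i hgi
    set P := lcmap x w (g i) with hP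
    have hPt : ∀ t ∈ Set.Icc (0 : ℝ) 1, 0 ≤ P.eval t := by
      intro t ht
      rw [hP, lcmap_eval]
      exact hseg' t ht i
    have hP0 : P.eval 0 = 0 := by rw [hP, lcmap_eval_zero]; exact hgi
    obtain ⟨hc1, hc2⟩ := coeff_nonneg_of_nonneg P hPt hP0
    rw [hP, lcmap_coeff_one] at hc1
    rcases lt_or_eq_of_le hc1 with h | h
    · exact h
    · exfalso
      have h' : P.coeff 1 = 0 := by rw [hP, lcmap_coeff_one]; exact h.symm
      have hc2' := hc2 h'
      have hh : 0 ≤ hessQuad (g i) x w := by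
        rw [← lcmap_coeff_two x w (g i)]
        rw [hP] at hc2'
        linarith
      have hneg := hqc i hgi w hwne h.symm
      linarith
  -- evaluation at x
  have heval : eval x σ0 + ∑ i, eval x (σ i) * eval x (g i) = 0 := by
    simpa only [map_add, map_sum, map_mul] using hq0
  have hs0nn : 0 ≤ eval x σ0 := isSOS_eval_nonneg hσ0 x
  have hsum_nn : ∀ i ∈ Finset.univ, 0 ≤ eval x (σ i) * eval x (g i) :=
    fun i _ => mul_nonneg (isSOS_eval_nonneg (hσ i) x) (hx i)
  have hsumnn : 0 ≤ ∑ i, eval x (σ i) * eval x (g i) := Finset.sum_nonneg hsum_nn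
  have hs00 : eval x σ0 = 0 := by linarith
  have hsum0 : ∑ i, eval x (σ i) * eval x (g i) = 0 := by linarith
  have hprod : ∀ i, eval x (σ i) * eval x (g i) = 0 := fun i =>
    (Finset.sum_eq_zero_iff_of_nonneg hsum_nn).mp hsum0 i (Finset.mem_univ i)
  have hσ0flat := isSOS_flat hσ0 x hs00
  have hgradσ0 : gradDot σ0 x w = 0 := by
    unfold gradDot
    exact Finset.sum_eq_zero fun j _ => by rw [hσ0flat.1 j, zero_mul]
  -- gradient of q vanishes at x
  have hgradq : gradDot (σ0 + ∑ i, σ i * g i) x w = 0 := by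
    unfold gradDot
    exact Finset.sum_eq_zero fun j _ => by rw [hq1 j, zero_mul]
  rw [gradDot_add, gradDot_sum, hgradσ0, zero_add] at hgradq
  have hterm_nn : ∀ i ∈ Finset.univ, 0 ≤ gradDot (σ i * g i) x w := by
    intro i _
    rw [gradDot_mul]
    by_cases hgi : eval x (g i) = 0
    · have hpos := hactive i hgi
      have hσnn := isSOS_eval_nonneg (hσ i) x
      rw [hgi, zero_mul, add_zero]
      exact mul_nonneg hσnn (le_of_lt hpos)
    · have hσi0 : eval x (σ i) = 0 :=
        (mul_eq_zero.mp (hprod i)).resolve_right hgi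
      have hflat := isSOS_flat (hσ i) x hσi0
      have hgσ : gradDot (σ i) x w = 0 := by
        unfold gradDot
        exact Finset.sum_eq_zero fun j _ => by rw [hflat.1 j, zero_mul]
      rw [hσi0, hgσ, zero_mul, mul_zero, add_zero]
  have hterm0 : ∀ i, gradDot (σ i * g i) x w = 0 := fun i =>
    (Finset.sum_eq_zero_iff_of_nonneg hterm_nn).mp hgradq i (Finset.mem_univ i)
  -- all σ i vanish at x
  have hσall : ∀ i, eval x (σ i) = 0 := by
    intro i
    by_cases hgi : eval x (g i) = 0
    · have ht := hterm0 i
      rw [gradDot_mul, hgi, zero_mul, add_zero] at ht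
      exact (mul_eq_zero.mp ht).resolve_right (ne_of_gt (hactive i hgi))
    · exact (mul_eq_zero.mp (hprod i)).resolve_right hgi
  have hflat : ∀ i, (∀ j, eval x (pderiv j (σ i)) = 0) ∧ ∀ u, 0 ≤ hessQuad (σ i) x u :=
    fun i => isSOS_flat (hσ i) x (hσall i)
  rw [hessQuad_add, hessQuad_sum]
  have h1 : 0 ≤ hessQuad σ0 x v := hσ0flat.2 v
  have h2 : 0 ≤ ∑ i, hessQuad (σ i * g i) x v := by
    refine Finset.sum_nonneg fun i _ => ?_
    rw [hessQuad_mul_left _ _ _ _ (hσall i) ((hflat i).1)]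
    exact mul_nonneg (hx i) ((hflat i).2 v)
  linarith
end
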